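/- Categoricity for g-repairs: if ≺ is a total acyclic priority (every pair of conflicting tuples is prioritized), then there is exactly one g-repair, i.e., exactly one ≪-maximal repair. -/
import Mathlib


/-- A relation is acyclic if no element is related to itself by the transitive closure. -/
def Acyclic {α : Type*} (prec : α → α → Prop) : Prop :=
  ∀ x, ¬ Relation.TransGen prec x x

/-- The global preference order on sets of tuples: `X ≪ Y`. -/
def ll {α : Type*} (prec : α → α → Prop) (X Y : Set α) : Prop :=
  ∀ x ∈ X \ Y, ∃ y ∈ Y \ X, prec x y

/-- Closed neighborhood of `x` in the conflict graph. -/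
def nbhd {α : Type*} (conflict : α → α → Prop) (x : α) : Set α :=
  {x} ∪ {y | conflict x y}

/-- The winnow operator: elements of `s` not dominated by any element of `s`. -/
def winnow {α : Type*} (prec : α → α → Prop) (s : Set α) : Set α :=
  {t ∈ s | ¬ ∃ t' ∈ s, prec t t'}

/-- A repair: a maximal subset of `r` containing no conflicting pair. -/
def IsRepair {α : Type*} (r : Set α) (conflict : α → α → Prop) (X : Set α) : Prop :=
  X ⊆ r ∧ (∀ a ∈ X, ∀ b ∈ X, ¬ conflict a b) ∧
    ∀ y ∈ r, y ∉ X → ∃ a ∈ X, conflict y a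

/-- A locally preferred repair: obtainable by iteratively choosing an undominated
tuple and removing it together with its conflict neighborhood. -/
def IsLRepair {α : Type*} (r : Set α) (conflict prec : α → α → Prop) (X : Set α) : Prop :=
  ∃ (n : ℕ) (x : Fin n → α), Function.Injective x ∧ X = Set.range x ∧
    (∀ i : Fin n, x i ∈ winnow prec (r \ {y | ∃ j, j < i ∧ y ∈ nbhd conflict (x j)})) ∧
    winnow prec (r \ {y | ∃ i, y ∈ nbhd conflict (x i)}) = ∅

/-- A globally preferred repair: a `≪`-maximal repair. -/
def IsGRepair {α : Type*} (r : Set α) (conflict prec : α → α → Prop) (X : Set α) : Prop :=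
  IsRepair r conflict X ∧ ∀ Y, IsRepair r conflict Y → ll prec X Y → Y = X

/-- categoricity for g-repairs. A total acyclic priority yields a
unique g-repair. -/
theorem grepair_unique_of_total {α : Type*} (r : Set α) (hr : r.Finite)
    (conflict prec : α → α → Prop)
    (hsymm : ∀ x y, conflict x y → conflict y x)
    (hirr : ∀ x, ¬ conflict x x)
    (hsub : ∀ x y, prec x y → conflict x y)
    (hasymm : ∀ x y, prec x y → ¬ prec y x)
    (hacyc : Acyclic prec)
    (htotal : ∀ x y, conflict x y → prec x y ∨ prec y x) :
    ∃! X : Set α, IsGRepair r conflict prec X := by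
  classical
  haveI := hr.to_subtype
  -- priority on the subtype
  let p : r → r → Prop := fun a b => prec (a : α) (b : α)
  let t : r → r → Prop := Function.swap p
  haveI : IsIrrefl r (Relation.TransGen t) := by
    constructor
    intro a h
    exact hacyc a ((Relation.transGen_swap.mp h).lift (fun x : r => (x : α))
      (fun _ _ hh => hh))
  have wfT : WellFounded (Relation.TransGen t) :=
    Finite.wellFounded_of_trans_of_irrefl _
  have wft : WellFounded t := Subrelation.wf (fun h => Relation.TransGen.single h) wfT
  -- kept x ↔ no kept element dominates x
  let kept : r → Prop := wft.fix (fun x IH => ∀ y, (h : p x y) → ¬ IH y h)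
  have kept_iff : ∀ x : r, kept x ↔ ∀ y : r, p x y → ¬ kept y := by
    intro x
    have := wft.fix_eq (fun x (IH : ∀ y, t y x → Prop) => ∀ y, (h : p x y) → ¬ IH y h) x
    exact this ▸ Iff.rfl
  let G : Set α := {a | ∃ h : a ∈ r, kept ⟨a, h⟩}
  have hGr : G ⊆ r := fun a ha => ha.1
  -- if not kept, dominated by a kept element
  have hdom : ∀ x (hx : x ∈ r), x ∉ G → ∃ z, z ∈ G ∧ prec x z := by
    intro x hx hxG
    have : ¬ kept ⟨x, hx⟩ := fun hk => hxG ⟨hx, hk⟩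
    rw [kept_iff] at this
    push_neg at this
    obtain ⟨z, hz1, hz2⟩ := this
    exact ⟨z, ⟨z.2, hz2⟩, hz1⟩
  -- G is conflict-free
  have hGfree : ∀ a ∈ G, ∀ b ∈ G, ¬ conflict a b := by
    intro a ha b hb hc
    rcases htotal a b hc with h | h
    · exact ((kept_iff ⟨a, ha.1⟩).mp ha.2 ⟨b, hb.1⟩ h) hb.2
    · exact ((kept_iff ⟨b, hb.1⟩).mp hb.2 ⟨a, ha.1⟩ h) ha.2
  have hGrep : IsRepair r conflict G := by
    refine ⟨hGr, hGfree, ?_⟩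
    intro y hy hyG
    obtain ⟨z, hzG, hz⟩ := hdom y hy hyG
    exact ⟨z, hzG, hsub _ _ hz⟩
  -- every repair is ≪ G
  have hllG : ∀ Y, IsRepair r conflict Y → ll prec Y G := by
    intro Y hY x hx
    obtain ⟨z, hzG, hz⟩ := hdom x (hY.1 hx.1) hx.2
    have hzY : z ∉ Y := fun hzY => hY.2.1 x hx.1 z hzY (hsub _ _ hz)
    exact ⟨z, ⟨hzG, hzY⟩, hz⟩
  -- G is a g-repair
  have hGmax : ∀ Y, IsRepair r conflict Y → ll prec G Y → Y = G := by
    intro Y hY hll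
    have key : ∀ x : r, ¬ ((x : α) ∈ G ∧ (x : α) ∉ Y) := by
      intro x
      induction x using wfT.induction with
      | _ x IH =>
        rintro ⟨hxG, hxY⟩
        obtain ⟨y, ⟨hyY, hyG⟩, hxy⟩ := hll x ⟨hxG, hxY⟩
        have hyr : y ∈ r := hY.1 hyY
        obtain ⟨z, hzG, hz⟩ := hdom y hyr hyG
        have hzY : z ∉ Y := fun hzY => hY.2.1 y hyY z hzY (hsub _ _ hz)
        have hzr : z ∈ r := hzG.1
        have hstep : Relation.TransGen t ⟨z, hzr⟩ x := by
          refine Relation.transGen_swap.mpr ?_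
          exact Relation.TransGen.tail (Relation.TransGen.single (show p x ⟨y, hyr⟩ from hxy))
            (show p ⟨y, hyr⟩ ⟨z, hzr⟩ from hz)
        exact IH _ hstep ⟨hzG, hzY⟩
    have hGY : G ⊆ Y := by
      intro a ha
      by_contra haY
      exact key ⟨a, ha.1⟩ ⟨ha, haY⟩
    apply Set.Subset.antisymm _ hGY
    intro y hyY
    by_contra hyG
    obtain ⟨z, hzG, hz⟩ := hdom y (hY.1 hyY) hyG
    exact hY.2.1 y hyY z (hGY hzG) (hsub _ _ hz)
  refine ⟨G, ⟨hGrep, hGmax⟩, ?_⟩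
  intro X hX
  exact (hX.2 G hGrep (hllG X hX.1)).symm
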